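/- Let L > 0, let s0 be a positive integer, let ρ > 0, and let w : [−ρ/2, ρ/2] → ℝ be a non-negative absolutely continuous function with weak derivative w' ∈ L¹(−ρ/2, ρ/2). Suppose w(0) > 2L and w(x̄) < L·2^{−s0} for some x̄ ∈ [−ρ/2, ρ/2]. Then (s0 − 1)·ln 2 ≤ ∫_{{x ∈ (−ρ/2, ρ/2) : w(x) < L(1 − 2^{−s0})}} |w'(x)| / (w(x) + L·2^{−s0}) dx. -/

import Mathlib

open MeasureTheory Set Real

lemma abs_log_sub_log_le' {a b : ℝ} (ha : 0 < a) (hb : 0 < b) :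
    |Real.log a - Real.log b| ≤ |a - b| / min a b := by
  rcases le_total b a with h | h
  · rw [abs_of_nonneg (sub_nonneg.2 (Real.log_le_log hb h)),
      abs_of_nonneg (sub_nonneg.2 h), min_eq_right h,
      ← Real.log_div (ne_of_gt ha) (ne_of_gt hb)]
    have := Real.log_le_sub_one_of_pos (div_pos ha hb)
    have : Real.log (a / b) ≤ a / b - 1 := this
    rw [div_sub_one (ne_of_gt hb)] at this
    linarith
  · rw [abs_sub_comm, abs_of_nonneg (sub_nonneg.2 (Real.log_le_log ha h)),
      abs_sub_comm, abs_of_nonneg (sub_nonneg.2 h), min_eq_left h,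
      ← Real.log_div (ne_of_gt hb) (ne_of_gt ha)]
    have := Real.log_le_sub_one_of_pos (div_pos hb ha)
    rw [div_sub_one (ne_of_gt ha)] at this
    linarith

lemma min_min_eq' {u v c : ℝ} (h : min u v ≤ c) : min (min u c) (min v c) = min u v := by
  rcases le_total u v with hh | hh
  · rw [min_eq_left hh] at h
    rw [min_eq_left h, min_eq_left hh, min_eq_left (le_min hh h)]
  · rw [min_eq_right hh] at h
    rw [min_eq_left h, min_eq_right (le_min hh h), min_eq_right hh]

set_option maxHeartbeats 1000000 in
/-- the one-dimensional logarithmic estimate at the core of the decay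
lemma. Here `w` is non-negative and absolutely continuous on `[-ρ/2, ρ/2]` with weak
derivative `w' ∈ L¹`, `w(0) > 2L` and `w(x̄) < L/2^{s₀}`. -/
theorem log_estimate (L : ℝ) (hL : 0 < L) (s0 : ℕ) (hs0 : 0 < s0)
    (ρ : ℝ) (hρ : 0 < ρ) (w w' : ℝ → ℝ)
    (hw_nonneg : ∀ x ∈ Icc (-(ρ/2)) (ρ/2), 0 ≤ w x)
    (hw'_int : IntegrableOn w' (Icc (-(ρ/2)) (ρ/2)) volume)
    (hw_ac : ∀ a ∈ Icc (-(ρ/2)) (ρ/2), ∀ b ∈ Icc (-(ρ/2)) (ρ/2), a ≤ b →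
        w b - w a = ∫ x in a..b, w' x)
    (h0 : 2 * L < w 0)
    (xbar : ℝ) (hxbar : xbar ∈ Icc (-(ρ/2)) (ρ/2)) (hxw : w xbar < L / 2 ^ s0) :
    ((s0 : ℝ) - 1) * Real.log 2 ≤
      ∫ x in {x ∈ Ioo (-(ρ/2)) (ρ/2) | w x < L * (1 - 1 / 2 ^ s0)},
        |w' x| / (w x + L / 2 ^ s0) := by
  set δ : ℝ := L / 2 ^ s0 with hδdef
  have hδ : 0 < δ := by positivity
  have h2s : (2:ℝ) ≤ 2 ^ s0 := by
    calc (2:ℝ) = 2 ^ 1 := (pow_one 2).symm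
    _ ≤ 2 ^ s0 := pow_le_pow_right₀ one_le_two hs0
  have hδL2 : δ ≤ L / 2 := by
    rw [hδdef]
    exact div_le_div_of_nonneg_left hL.le two_pos h2s
  have hIcc0 : (0:ℝ) ∈ Icc (-(ρ/2)) (ρ/2) := by
    constructor <;> [linarith; linarith]
  have hwx0 : 0 ≤ w xbar := hw_nonneg _ hxbar
  set c₀ : ℝ := L - δ with hc₀def
  have hδc₀ : δ ≤ c₀ := by rw [hc₀def]; linarith
  -- the set S
  have hSeq : {x ∈ Ioo (-(ρ/2)) (ρ/2) | w x < L * (1 - 1 / 2 ^ s0)}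
      = Ioo (-(ρ/2)) (ρ/2) ∩ w ⁻¹' (Iio c₀) := by
    ext x
    simp only [mem_setOf_eq, mem_inter_iff, mem_preimage, mem_Iio, mem_sep_iff]
    have hr : L * (1 - 1 / 2 ^ s0) = L - L / 2 ^ s0 := by ring
    constructor
    · rintro ⟨h1, h2⟩; refine ⟨h1, ?_⟩
      rw [hc₀def, hδdef]; linarith
    · rintro ⟨h1, h2⟩; refine ⟨h1, ?_⟩
      rw [hc₀def, hδdef] at h2; linarith
  set S : Set ℝ := Ioo (-(ρ/2)) (ρ/2) ∩ w ⁻¹' (Iio c₀) with hSdef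
  rw [hSeq]
  -- continuity of w
  have hcont : ContinuousOn w (Icc (-(ρ/2)) (ρ/2)) := by
    have hc : ContinuousOn (fun x => w (-(ρ/2)) + ∫ t in Ioc (-(ρ/2)) x, w' t)
        (Icc (-(ρ/2)) (ρ/2)) :=
      continuousOn_const.add (intervalIntegral.continuousOn_primitive hw'_int)
    apply hc.congr
    intro x hx
    have := hw_ac _ (left_mem_Icc.2 (by linarith)) x hx hx.1
    rw [intervalIntegral.integral_of_le hx.1] at this
    linarith
  have hSsub : S ⊆ Icc (-(ρ/2)) (ρ/2) := fun x hx => Ioo_subset_Icc_self hx.1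
  have hSopen : IsOpen S :=
    (hcont.mono (fun x hx => Ioo_subset_Icc_self hx)).isOpen_inter_preimage isOpen_Ioo isOpen_Iio
  have hSmeas : MeasurableSet S := hSopen.measurableSet
  set g : ℝ → ℝ := fun x => |w' x| / (w x + δ) with hgdef
  have hgpos' : ∀ x : ℝ, 0 ≤ w x → 0 ≤ g x := by
    intro x hx
    have : 0 < w x + δ := by linarith
    positivity
  -- integrability of g on S
  have hgint : IntegrableOn g S volume := by
    have hwS : ContinuousOn w S := hcont.mono hSsub
    have hw'm : AEStronglyMeasurable w' (volume.restrict S) :=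
      (hw'_int.mono_set hSsub).aestronglyMeasurable
    have hw'abs : AEStronglyMeasurable (fun x => |w' x|) (volume.restrict S) := by
      simpa using hw'm.norm
    have hwadd : AEStronglyMeasurable (fun x => w x + δ) (volume.restrict S) :=
      (hwS.add continuousOn_const).aestronglyMeasurable hSmeas
    have hmeas : AEStronglyMeasurable g (volume.restrict S) := by
      rw [hgdef]
      exact (hw'abs.aemeasurable.div hwadd.aemeasurable).aestronglyMeasurable
    have habs : IntegrableOn (fun x => |w' x|) (Icc (-(ρ/2)) (ρ/2)) volume := hw'_int.abs
    have hbound : IntegrableOn (fun x => |w' x| / δ) S volume :=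
      ((habs.mono_set hSsub).div_const δ)
    apply hbound.mono' hmeas
    apply ae_restrict_of_forall_mem hSmeas
    intro x hx
    have hw0 : 0 ≤ w x := hw_nonneg x (hSsub hx)
    have h1 : 0 ≤ g x := hgpos' x hw0
    rw [Real.norm_eq_abs, abs_of_nonneg h1, hgdef]
    apply div_le_div_of_nonneg_left (abs_nonneg _) hδ (by linarith)
  have hgpos : ∀ x ∈ Icc (-(ρ/2)) (ρ/2), 0 ≤ g x := fun x hx => hgpos' x (hw_nonneg x hx)
  set I : ℝ := ∫ x in S, g x with hIdef
  have hInonneg : 0 ≤ I := setIntegral_nonneg hSmeas fun x hx => hgpos x (hSsub hx)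
  -- xbar ≠ 0
  have hx0 : xbar ≠ 0 := by
    intro h; rw [h] at hxw
    linarith
  -- main estimate for each small ε
  have key : ∀ ε : ℝ, 0 < ε → ε < δ → ε < c₀ - w xbar →
      ((δ - ε)/δ) * (Real.log (L - ε) - Real.log (w xbar + δ)) ≤ I := by
    intro ε hε0 hεδ hεc
    set c : ℝ := c₀ - ε with hcdef
    have hwxc : w xbar < c := by rw [hcdef]; linarith
    have hcpos : 0 < c := lt_of_le_of_lt hwx0 hwxc
    have hcw0 : c < w 0 := by
      have : c ≤ L := by rw [hcdef, hc₀def]; linarith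
      linarith
    have hcδL : c + δ = L - ε := by rw [hcdef, hc₀def]; ring
    set a0 : ℝ := min 0 xbar with ha0def
    set b0 : ℝ := max 0 xbar with hb0def
    have hab : a0 < b0 := by
      rcases lt_or_gt_of_ne hx0 with hx | hx
      · rw [ha0def, hb0def, min_eq_right hx.le, max_eq_left hx.le]; exact hx
      · rw [ha0def, hb0def, min_eq_left hx.le, max_eq_right hx.le]; exact hx
    have hsubI : Icc a0 b0 ⊆ Icc (-(ρ/2)) (ρ/2) := by
      apply Icc_subset_Icc
      · rw [ha0def]; exact le_min hIcc0.1 hxbar.1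
      · rw [hb0def]; exact max_le hIcc0.2 hxbar.2
    -- uniform continuity
    have hUC := (isCompact_Icc.uniformContinuousOn_of_continuous (hcont.mono hsubI))
    rw [Metric.uniformContinuousOn_iff] at hUC
    obtain ⟨η, hη, hmod⟩ := hUC ε hε0
    obtain ⟨N, hN⟩ := exists_nat_gt ((b0 - a0)/η)
    have hNpos : 0 < (N:ℝ) := lt_of_le_of_lt (div_nonneg (by linarith) hη.le) hN
    set h : ℝ := (b0 - a0)/N with hhdef
    have hhpos : 0 < h := div_pos (by linarith) hNpos
    have hhη : h < η := by
      rw [hhdef, div_lt_iff₀ hNpos]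
      rw [div_lt_iff₀ hη] at hN
      calc b0 - a0 < (N:ℝ) * η := hN
        _ = η * N := mul_comm _ _
    set p : ℕ → ℝ := fun i => a0 + i * h with hpdef
    have hpsucc : ∀ i : ℕ, p (i+1) = p i + h := by
      intro i; simp only [hpdef]; push_cast; ring
    have hpmono : ∀ i j : ℕ, i ≤ j → p i ≤ p j := by
      intro i j hij
      simp only [hpdef]
      have h1 : (i:ℝ) ≤ j := Nat.cast_le.2 hij
      have := mul_le_mul_of_nonneg_right h1 hhpos.le
      linarith
    have hp0 : p 0 = a0 := by simp [hpdef]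
    have hpN : p N = b0 := by
      simp only [hpdef, hhdef]
      field_simp
      ring
    have hpmem : ∀ i : ℕ, i ≤ N → p i ∈ Icc a0 b0 := by
      intro i hi
      constructor
      · rw [← hp0]; exact hpmono 0 i (Nat.zero_le _)
      · rw [← hpN]; exact hpmono i N hi
    set F : ℕ → ℝ := fun i => Real.log (min (w (p i)) c + δ) with hFdef
    set A : ℕ → Set ℝ := fun i => Ioo (p i) (p (i+1)) ∩ S with hAdef
    have hAmeas : ∀ i : ℕ, MeasurableSet (A i) := fun i => measurableSet_Ioo.inter hSmeas
    have hAsub : ∀ i : ℕ, A i ⊆ S := fun i => inter_subset_right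
    have hKpos : 0 < δ/(δ-ε) := div_pos hδ (by linarith)
    have hAint : ∀ i : ℕ, IntegrableOn g (A i) volume := fun i => hgint.mono_set (hAsub i)
    have hAnonneg : ∀ i : ℕ, 0 ≤ ∫ x in A i, g x := fun i =>
      setIntegral_nonneg (hAmeas i) (fun x hx => hgpos x (hSsub (hAsub i hx)))
    have habs2 : IntegrableOn (fun x => |w' x|) (Icc (-(ρ/2)) (ρ/2)) volume := hw'_int.abs
    -- the step estimate
    have hstep : ∀ i : ℕ, i < N → |F (i+1) - F i| ≤ (δ/(δ-ε)) * ∫ x in A i, g x := by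
      intro i hi
      have hpi : p i ∈ Icc a0 b0 := hpmem i hi.le
      have hpi1 : p (i+1) ∈ Icc a0 b0 := hpmem (i+1) hi
      have hpiI : p i ∈ Icc (-(ρ/2)) (ρ/2) := hsubI hpi
      have hpi1I : p (i+1) ∈ Icc (-(ρ/2)) (ρ/2) := hsubI hpi1
      have hwpi : 0 ≤ w (p i) := hw_nonneg _ hpiI
      have hwpi1 : 0 ≤ w (p (i+1)) := hw_nonneg _ hpi1I
      have hplt : p i < p (i+1) := by rw [hpsucc]; linarith
      by_cases hcase : c ≤ w (p i) ∧ c ≤ w (p (i+1))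
      · have heq : F (i+1) - F i = 0 := by
          simp only [hFdef, min_eq_right hcase.1, min_eq_right hcase.2, sub_self]
        rw [heq, abs_zero]
        exact mul_nonneg hKpos.le (hAnonneg i)
      · set m : ℝ := min (w (p i)) (w (p (i+1))) with hmdef
        have hm0 : 0 ≤ m := le_min hwpi hwpi1
        have hmδ : 0 < m + δ := by linarith
        have hmlt : m < c := by
          rw [not_and_or, not_le, not_le] at hcase
          rcases hcase with hcc | hcc
          · exact lt_of_le_of_lt (min_le_left _ _) hcc
          · exact lt_of_le_of_lt (min_le_right _ _) hcc
        -- oscillation bounds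
        have hIccsub : Icc (p i) (p (i+1)) ⊆ Icc a0 b0 := Icc_subset_Icc hpi.1 hpi1.2
        have hosc : ∀ t ∈ Icc (p i) (p (i+1)), |w t - w (p i)| < ε ∧ |w t - w (p (i+1))| < ε := by
          intro t ht
          have htm : t ∈ Icc a0 b0 := hIccsub ht
          have hd1 : dist t (p i) < η := by
            rw [Real.dist_eq, abs_of_nonneg (by linarith [ht.1] : (0:ℝ) ≤ t - p i)]
            have := ht.2; rw [hpsucc] at this; linarith
          have hd2 : dist t (p (i+1)) < η := by
            rw [Real.dist_eq, abs_of_nonpos (by linarith [ht.2] : t - p (i+1) ≤ 0), hpsucc]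
            linarith [ht.1]
          constructor
          · have := hmod t htm (p i) hpi hd1; rwa [Real.dist_eq] at this
          · have := hmod t htm (p (i+1)) hpi1 hd2; rwa [Real.dist_eq] at this
        have hpieceS : Ioo (p i) (p (i+1)) ⊆ S := by
          intro t ht
          have htI : t ∈ Icc (p i) (p (i+1)) := Ioo_subset_Icc_self ht
          have h1 := abs_lt.1 (hosc t htI).1
          have h2 := abs_lt.1 (hosc t htI).2
          have hwtc : w t < c₀ := by
            have : w t < m + ε := by
              rcases min_cases (w (p i)) (w (p (i+1))) with ⟨he, _⟩ | ⟨he, _⟩ <;>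
                rw [hmdef, he] <;> linarith
            have : c + ε = c₀ := by rw [hcdef]; ring
            linarith
          refine ⟨?_, hwtc⟩
          constructor
          · have : a0 ≤ p i := hpi.1
            have ha0 : -(ρ/2) ≤ a0 := (hsubI (left_mem_Icc.2 hab.le)).1
            linarith [ht.1]
          · have : p (i+1) ≤ b0 := hpi1.2
            have hb0 : b0 ≤ ρ/2 := (hsubI (right_mem_Icc.2 hab.le)).2
            linarith [ht.2]
        have hAeq : A i = Ioo (p i) (p (i+1)) := by
          rw [hAdef]; exact inter_eq_self_of_subset_left hpieceS
        -- log estimate on the piece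
        have hb1 : 0 < min (w (p (i+1))) c + δ := by
          have := le_min hwpi1 hcpos.le; linarith
        have hb2 : 0 < min (w (p i)) c + δ := by
          have := le_min hwpi hcpos.le; linarith
        have h1 : |F (i+1) - F i| ≤ |w (p (i+1)) - w (p i)| / (m + δ) := by
          have hlog := abs_log_sub_log_le' hb1 hb2
          have habs : |(min (w (p (i+1))) c + δ) - (min (w (p i)) c + δ)|
              ≤ |w (p (i+1)) - w (p i)| := by
            have := abs_min_sub_min_le_max (w (p (i+1))) c (w (p i)) c
            simpa using this
          have hmin : min (min (w (p (i+1))) c + δ) (min (w (p i)) c + δ) = m + δ := by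
            rw [min_add_add_right]
            congr 1
            have hle : min (w (p (i+1))) (w (p i)) ≤ c := by
              rw [min_comm]; exact le_of_lt (lt_of_le_of_lt (le_of_eq hmdef.symm) hmlt)
            rw [min_min_eq' hle, hmdef, min_comm (w (p i)) (w (p (i+1)))]
          rw [hmin] at hlog
          refine le_trans hlog ?_
          gcongr
        have h2 : |w (p (i+1)) - w (p i)| ≤ ∫ t in Ioo (p i) (p (i+1)), |w' t| := by
          rw [hw_ac _ hpiI _ hpi1I hplt.le]
          have hni := intervalIntegral.norm_integral_le_integral_norm
            (f := w') (a := p i) (b := p (i+1)) (μ := volume) hplt.le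
          calc |∫ x in p i..p (i+1), w' x| ≤ ∫ x in p i..p (i+1), |w' x| := by
                simpa [Real.norm_eq_abs] using hni
            _ = ∫ t in Ioo (p i) (p (i+1)), |w' t| := by
                rw [intervalIntegral.integral_of_le hplt.le, integral_Ioc_eq_integral_Ioo]
        have hIoosub : Ioo (p i) (p (i+1)) ⊆ Icc (-(ρ/2)) (ρ/2) :=
          fun t ht => hsubI (hIccsub (Ioo_subset_Icc_self ht))
        have hint1 : IntegrableOn (fun t => |w' t| / (m + δ)) (Ioo (p i) (p (i+1))) volume :=
          (habs2.mono_set hIoosub).div_const _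
        have hint2 : IntegrableOn (fun t => (δ/(δ-ε)) * g t) (Ioo (p i) (p (i+1))) volume :=
          (hgint.mono_set hpieceS).const_mul _
        have h3 : ∫ t in Ioo (p i) (p (i+1)), |w' t| / (m + δ)
            ≤ ∫ t in Ioo (p i) (p (i+1)), (δ/(δ-ε)) * g t := by
          apply setIntegral_mono_on hint1 hint2 measurableSet_Ioo
          intro t ht
          have htI : t ∈ Icc (p i) (p (i+1)) := Ioo_subset_Icc_self ht
          have hwt : 0 ≤ w t := hw_nonneg t (hIoosub ht)
          have ho1 := abs_lt.1 (hosc t htI).1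
          have ho2 := abs_lt.1 (hosc t htI).2
          have hmt : w t - ε ≤ m := le_min (by linarith) (by linarith)
          have hwtδ : 0 < w t + δ := by linarith
          have hXY : (δ - ε) * (w t + δ) ≤ δ * (m + δ) := by
            have e1 : δ * (w t - ε) ≤ δ * m := mul_le_mul_of_nonneg_left hmt hδ.le
            have e2 : 0 ≤ ε * w t := mul_nonneg hε0.le hwt
            calc (δ - ε) * (w t + δ) = δ * (w t - ε) + δ * δ - ε * w t := by ring
              _ ≤ δ * m + δ * δ - 0 := by linarith
              _ = δ * (m + δ) := by ring
          rw [hgdef]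
          rw [show (δ/(δ-ε)) * (|w' t| / (w t + δ)) = (δ * |w' t|)/((δ-ε) * (w t + δ)) from by
            field_simp]
          rw [div_le_div_iff₀ hmδ (mul_pos (by linarith : (0:ℝ) < δ - ε) hwtδ)]
          calc |w' t| * ((δ - ε) * (w t + δ)) ≤ |w' t| * (δ * (m + δ)) :=
                mul_le_mul_of_nonneg_left hXY (abs_nonneg (w' t))
            _ = δ * |w' t| * (m + δ) := by ring
        calc |F (i+1) - F i| ≤ |w (p (i+1)) - w (p i)| / (m + δ) := h1
          _ ≤ (∫ t in Ioo (p i) (p (i+1)), |w' t|) / (m + δ) := by gcongr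
          _ = ∫ t in Ioo (p i) (p (i+1)), |w' t| / (m + δ) := by rw [integral_div]
          _ ≤ ∫ t in Ioo (p i) (p (i+1)), (δ/(δ-ε)) * g t := h3
          _ = (δ/(δ-ε)) * ∫ t in Ioo (p i) (p (i+1)), g t := by rw [integral_const_mul]
          _ = (δ/(δ-ε)) * ∫ x in A i, g x := by rw [hAeq]
    -- telescoping
    have htele : |F N - F 0| ≤ ∑ i ∈ Finset.range N, |F (i+1) - F i| := by
      calc |F N - F 0| = |∑ i ∈ Finset.range N, (F (i+1) - F i)| := by
            rw [Finset.sum_range_sub]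
        _ ≤ ∑ i ∈ Finset.range N, |F (i+1) - F i| := Finset.abs_sum_le_sum_abs _ _
    -- summing the pieces
    have hdisj : (↑(Finset.range N) : Set ℕ).Pairwise (Function.onFun Disjoint A) := by
      intro i _ j _ hij
      have key : ∀ i j : ℕ, i < j → Disjoint (A i) (A j) := by
        intro i j hlt
        apply Set.disjoint_left.2
        intro x hx1 hx2
        have h1 : x < p (i+1) := hx1.1.2
        have h2 : p j < x := hx2.1.1
        have := hpmono (i+1) j hlt
        linarith
      rcases lt_or_gt_of_ne hij with hl | hl
      · exact key i j hl
      · exact (key j i hl).symm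
    have hsum : ∑ i ∈ Finset.range N, ∫ x in A i, g x ≤ I := by
      have hbi : ∫ x in ⋃ i ∈ Finset.range N, A i, g x
          = ∑ i ∈ Finset.range N, ∫ x in A i, g x :=
        integral_biUnion_finset (Finset.range N) (fun i _ => hAmeas i) hdisj
          (fun i _ => hAint i)
      rw [← hbi, hIdef]
      apply setIntegral_mono_set hgint
      · exact ae_restrict_of_forall_mem hSmeas (fun x hx => hgpos x (hSsub hx))
      · have hsub : (⋃ i ∈ Finset.range N, A i) ⊆ S := by
          intro x hx
          simp only [mem_iUnion] at hx
          obtain ⟨i, _, hxi⟩ := hx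
          exact hAsub i hxi
        exact hsub.eventuallyLE
    -- combining
    have hchain : |F N - F 0| ≤ (δ/(δ-ε)) * I := by
      calc |F N - F 0| ≤ ∑ i ∈ Finset.range N, |F (i+1) - F i| := htele
        _ ≤ ∑ i ∈ Finset.range N, (δ/(δ-ε)) * ∫ x in A i, g x :=
            Finset.sum_le_sum (fun i hi => hstep i (Finset.mem_range.1 hi))
        _ = (δ/(δ-ε)) * ∑ i ∈ Finset.range N, ∫ x in A i, g x := by
            rw [Finset.mul_sum]
        _ ≤ (δ/(δ-ε)) * I := by
            exact mul_le_mul_of_nonneg_left hsum hKpos.le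
    -- identify the endpoint values
    have hF0 : ∀ q : ℕ, p q = 0 → F q = Real.log (L - ε) := by
      intro q hq
      simp only [hFdef, hq, min_eq_right hcw0.le, hcδL]
    have hFx : ∀ q : ℕ, p q = xbar → F q = Real.log (w xbar + δ) := by
      intro q hq
      simp only [hFdef, hq, min_eq_left hwxc.le]
    have hFval : |F N - F 0| = |Real.log (L - ε) - Real.log (w xbar + δ)| := by
      rcases lt_or_gt_of_ne hx0 with hx | hx
      · have ha : p 0 = xbar := by rw [hp0, ha0def]; exact min_eq_right hx.le
        have hb : p N = 0 := by rw [hpN, hb0def]; exact max_eq_left hx.le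
        rw [hF0 N hb, hFx 0 ha]
      · have ha : p 0 = 0 := by rw [hp0, ha0def]; exact min_eq_left hx.le
        have hb : p N = xbar := by rw [hpN, hb0def]; exact max_eq_right hx.le
        rw [hF0 0 ha, hFx N hb, abs_sub_comm]
    have hfin : Real.log (L - ε) - Real.log (w xbar + δ) ≤ (δ/(δ-ε)) * I := by
      rw [hFval] at hchain
      exact le_trans (le_abs_self _) hchain
    have hpos2 : (0:ℝ) ≤ (δ - ε)/δ := div_nonneg (by linarith) hδ.le
    have hδne : δ ≠ 0 := ne_of_gt hδ
    have hδεne : δ - ε ≠ 0 := ne_of_gt (by linarith)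
    calc ((δ - ε)/δ) * (Real.log (L - ε) - Real.log (w xbar + δ))
        ≤ ((δ - ε)/δ) * ((δ/(δ-ε)) * I) := mul_le_mul_of_nonneg_left hfin hpos2
      _ = I := by field_simp
  -- pass to the limit in ε
  have hlog : ((s0 : ℝ) - 1) * Real.log 2 < Real.log L - Real.log (w xbar + δ) := by
    have h1 : w xbar + δ < 2 * δ := by linarith
    have h2 : Real.log (w xbar + δ) < Real.log (2 * δ) :=
      Real.log_lt_log (by positivity) h1
    have h3 : Real.log (2 * δ) = Real.log 2 + Real.log L - s0 * Real.log 2 := by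
      rw [hδdef, Real.log_mul two_ne_zero (by positivity),
        Real.log_div (ne_of_gt hL) (by positivity), Real.log_pow]
      ring
    linarith
  have hcε : Filter.Tendsto (fun ε : ℝ => ((δ - ε)/δ) * (Real.log (L - ε) - Real.log (w xbar + δ)))
      (nhdsWithin 0 (Ioi 0)) (nhds (Real.log L - Real.log (w xbar + δ))) := by
    have hC : ContinuousAt (fun ε : ℝ => ((δ - ε)/δ) * (Real.log (L - ε) - Real.log (w xbar + δ))) 0 := by
      apply ContinuousAt.mul
      · exact (continuousAt_const.sub continuousAt_id).div_const δ
      · apply ContinuousAt.sub _ continuousAt_const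
        exact (Real.continuousAt_log (by simpa using ne_of_gt hL)).comp
          (continuousAt_const.sub continuousAt_id)
    have := hC.continuousWithinAt (s := Ioi (0:ℝ))
    simpa [sub_zero, div_self (ne_of_gt hδ)] using this.tendsto
  have hev : ∀ᶠ ε in nhdsWithin (0:ℝ) (Ioi 0),
      ((s0 : ℝ) - 1) * Real.log 2 ≤ ((δ - ε)/δ) * (Real.log (L - ε) - Real.log (w xbar + δ)) :=
    hcε.eventually_const_le hlog
  have hev2 : ∀ᶠ ε in nhdsWithin (0:ℝ) (Ioi 0), ε ∈ Ioo (0:ℝ) (min δ (c₀ - w xbar)) := by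
    apply Filter.eventually_of_mem (Ioo_mem_nhdsGT_of_mem _)
    · exact fun x hx => hx
    · exact ⟨le_refl 0, lt_min hδ (by linarith)⟩
  obtain ⟨ε, hε1, hε2⟩ := (hev.and hev2).exists
  obtain ⟨hε0, hεm⟩ := hε2
  exact le_trans hε1 (key ε hε0 (lt_of_lt_of_le hεm (min_le_left _ _))
    (lt_of_lt_of_le hεm (min_le_right _ _)))
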